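/- The limit of the maximal entropies H_n^max as n → ∞ equals (1 + t^{-2}) log₂(1/t), where t = (√5-1)/2, and this value equals L log₂ L - (L-1) log₂(L-1) with L = t^{-2}. -/

import Mathlib

open Finset Real goldenRatio Filter

/-- `H_n^max = log₂ f (n+1) - (1 / f (n+1)) ∑_{i=1}^{n-1} f i log₂ (f i)`. -/
noncomputable def Hmax (n : ℕ) : ℝ :=
  Real.logb 2 (Nat.fib (n + 1) : ℝ) -
    (1 / (Nat.fib (n + 1) : ℝ)) *
      ∑ i ∈ Finset.Icc 1 (n - 1), (Nat.fib i : ℝ) * Real.logb 2 (Nat.fib i : ℝ)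

noncomputable def HL : ℝ := Real.logb 2 φ
noncomputable def Hc : ℝ := Real.logb 2 (√5)
noncomputable def HE (i : ℕ) : ℝ := Real.logb 2 (Nat.fib i) - ((i : ℝ) * HL - Hc)

lemma sqrt5_pos : (0:ℝ) < √5 := Real.sqrt_pos.mpr (by norm_num)
lemma sq_sqrt5 : (√5) ^ 2 = 5 := Real.sq_sqrt (by norm_num)
lemma two_lt_sqrt5 : (2:ℝ) < √5 := by nlinarith [sq_sqrt5, sqrt5_pos]
lemma sqrt5_lt_3 : √5 < 3 := by nlinarith [sq_sqrt5, sqrt5_pos]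

lemma psi_sq : ψ ^ 2 = (3 - √5)/2 := by
  rw [goldenConj]; rw [div_pow]; rw [sub_sq]; rw [sq_sqrt5]; ring
lemma psi_sq_pos : 0 < ψ ^ 2 := pow_pos (by nlinarith [two_lt_sqrt5, goldenConj_neg] : (0:ℝ) < -ψ) 2 |>.trans_eq (by ring)
lemma psi_sq_lt_half : ψ ^ 2 < 1/2 := by rw [psi_sq]; nlinarith [two_lt_sqrt5]

lemma gold_psi_sq : φ * (-ψ ^ 2) = ψ := by
  linear_combination (-ψ) * goldenRatio_mul_goldenConj

lemma fib_real (i : ℕ) : (Nat.fib i : ℝ) = φ ^ i * (1 - (-ψ^2) ^ i) / √5 := by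
  rw [Real.coe_fib_eq]
  have h : φ ^ i * (-ψ^2) ^ i = ψ ^ i := by rw [← mul_pow, gold_psi_sq]
  rw [mul_sub, mul_one, h]

lemma abs_u_le (i : ℕ) (hi : 1 ≤ i) : |(-ψ^2 : ℝ) ^ i| ≤ (ψ^2) ^ i := by
  rw [abs_pow, abs_neg, abs_of_pos psi_sq_pos]

lemma u_pow_le (i : ℕ) (hi : 1 ≤ i) : ((ψ^2 : ℝ)) ^ i ≤ ψ ^ 2 := by
  calc ((ψ^2 : ℝ)) ^ i ≤ (ψ^2) ^ 1 :=
        pow_le_pow_of_le_one psi_sq_pos.le (by nlinarith [psi_sq_lt_half]) hi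
    _ = ψ ^ 2 := pow_one _

lemma one_sub_u_pos (i : ℕ) (hi : 1 ≤ i) : (0:ℝ) < 1 - (-ψ^2) ^ i := by
  have h1 := abs_u_le i hi
  have h2 := u_pow_le i hi
  have := psi_sq_lt_half
  have := abs_le.mp (h1.trans (h2.trans this.le))
  linarith [this.1, this.2]

lemma logb_fib (i : ℕ) (hi : 1 ≤ i) :
    Real.logb 2 (Nat.fib i) = (i:ℝ) * HL - Hc + Real.logb 2 (1 - (-ψ^2) ^ i) := by
  rw [fib_real]
  rw [Real.logb_div (mul_pos (pow_pos goldenRatio_pos i) (one_sub_u_pos i hi)).ne' sqrt5_pos.ne']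
  rw [Real.logb_mul (pow_pos goldenRatio_pos i).ne' (one_sub_u_pos i hi).ne']
  rw [Real.logb_pow]
  unfold HL Hc; ring

lemma HE_eq (i : ℕ) (hi : 1 ≤ i) : HE i = Real.logb 2 (1 - (-ψ^2) ^ i) := by
  unfold HE; rw [logb_fib i hi]; ring

lemma abs_log_one_sub {u : ℝ} (hu : |u| ≤ 1/2) : |Real.log (1 - u)| ≤ 2 * |u| := by
  obtain ⟨h1, h2⟩ := abs_le.mp hu
  have hy : (0:ℝ) < 1 - u := by linarith
  have hub : Real.log (1 - u) ≤ (1 - u) - 1 := Real.log_le_sub_one_of_pos hy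
  have hlb : 1 - (1 - u)⁻¹ ≤ Real.log (1 - u) := Real.one_sub_inv_le_log_of_pos hy
  have hinv : (1 - u)⁻¹ ≤ 2 := by
    rw [inv_le_comm₀ hy (by norm_num)]; linarith
  have hinvpos : 0 < (1 - u)⁻¹ := inv_pos.mpr hy
  have hmul : (1 - u) * (1 - u)⁻¹ = 1 := mul_inv_cancel₀ hy.ne'
  rw [abs_le]
  constructor
  · -- -2|u| ≤ log(1-u); log(1-u) ≥ 1 - (1-u)⁻¹ = -u/(1-u) ≥ -2|u|
    have habs : u ≤ |u| := le_abs_self u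
    nlinarith [abs_nonneg u, neg_abs_le u]
  · have : Real.log (1 - u) ≤ -u := by linarith
    calc Real.log (1 - u) ≤ -u := this
      _ ≤ |u| := neg_le_abs u
      _ ≤ 2 * |u| := by linarith [abs_nonneg u]

lemma abs_HE (i : ℕ) (hi : 1 ≤ i) : |HE i| ≤ 3 * (ψ^2) ^ i := by
  rw [HE_eq i hi]
  have hu : |(-ψ^2 : ℝ) ^ i| ≤ 1/2 :=
    (abs_u_le i hi).trans ((u_pow_le i hi).trans psi_sq_lt_half.le)
  have hlog : |Real.log (1 - (-ψ^2) ^ i)| ≤ 2 * |(-ψ^2 : ℝ) ^ i| := abs_log_one_sub hu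
  have hl2 : (0:ℝ) < Real.log 2 := Real.log_pos (by norm_num)
  rw [Real.logb, abs_div, abs_of_pos hl2, div_le_iff₀ hl2]
  have h32 : (2:ℝ)/3 ≤ Real.log 2 := by linarith [Real.log_two_gt_d9]
  have h2 : |(-ψ^2 : ℝ) ^ i| ≤ (ψ^2) ^ i := abs_u_le i hi
  nlinarith [abs_nonneg (Real.log (1 - (-ψ^2) ^ i)), pow_nonneg psi_sq_pos.le i]

lemma sum_fib_real (m : ℕ) :
    ∑ i ∈ Icc 1 m, (Nat.fib i : ℝ) = (Nat.fib (m+2) : ℝ) - 1 := by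
  induction m with
  | zero => simp
  | succ k ih =>
      rw [Finset.sum_Icc_succ_top (Nat.le_add_left 1 k), ih]
      have : Nat.fib (k+3) = Nat.fib (k+1) + Nat.fib (k+2) := by
        rw [show k+3 = (k+1)+2 by ring]; exact Nat.fib_add_two
      push_cast [this]; ring

lemma sum_i_fib_real (m : ℕ) :
    ∑ i ∈ Icc 1 m, (i:ℝ) * (Nat.fib i : ℝ) =
      (m:ℝ) * (Nat.fib (m+2) : ℝ) - (Nat.fib (m+3) : ℝ) + 2 := by
  induction m with
  | zero => simp [show Nat.fib 3 = 2 from rfl]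
  | succ k ih =>
      rw [Finset.sum_Icc_succ_top (Nat.le_add_left 1 k), ih]
      have h1 : Nat.fib (k+3) = Nat.fib (k+1) + Nat.fib (k+2) := by
        rw [show k+3 = (k+1)+2 by ring]; exact Nat.fib_add_two
      have h2 : Nat.fib (k+4) = Nat.fib (k+2) + Nat.fib (k+3) := by
        rw [show k+4 = (k+2)+2 by ring]; exact Nat.fib_add_two
      push_cast [show k+1+2 = k+3 by ring, show k+1+3 = k+4 by ring, h2, h1]
      ring

lemma fib_le (i : ℕ) (hi : 1 ≤ i) : (Nat.fib i : ℝ) ≤ 2 * φ ^ i / √5 := by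
  rw [fib_real]
  have h1 := abs_le.mp (abs_u_le i hi |>.trans ((u_pow_le i hi).trans psi_sq_lt_half.le))
  have hφ : (0:ℝ) < φ ^ i := pow_pos goldenRatio_pos i
  have hnum : φ ^ i * (1 - (-ψ^2) ^ i) ≤ 2 * φ ^ i := by nlinarith [h1.1]
  exact div_le_div_of_nonneg_right hnum sqrt5_pos.le

noncomputable def Mbd : ℝ := 6 / √5 * (1 / (1 - φ⁻¹))

lemma inv_gold_lt_one : φ⁻¹ < 1 := inv_lt_one_of_one_lt₀ one_lt_goldenRatio
lemma inv_goldenRatio_pos : 0 < φ⁻¹ := inv_pos.mpr goldenRatio_pos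

lemma term_bound (i : ℕ) (hi : 1 ≤ i) :
    |(Nat.fib i : ℝ) * HE i| ≤ 6 / √5 * (φ⁻¹) ^ i := by
  rw [abs_mul, abs_of_nonneg (by positivity : (0:ℝ) ≤ (Nat.fib i : ℝ))]
  have h1 : (Nat.fib i : ℝ) ≤ 2 * φ ^ i / √5 := fib_le i hi
  have h2 : |HE i| ≤ 3 * (ψ^2) ^ i := abs_HE i hi
  have key : φ ^ i * (ψ^2) ^ i = (φ⁻¹) ^ i := by
    rw [← mul_pow, inv_goldenRatio]
    congr 1
    linear_combination ψ * goldenRatio_mul_goldenConj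
  have hφ : (0:ℝ) < φ ^ i := pow_pos goldenRatio_pos i
  have hψ : (0:ℝ) ≤ (ψ^2 : ℝ) ^ i := pow_nonneg psi_sq_pos.le i
  calc (Nat.fib i : ℝ) * |HE i| ≤ (2 * φ ^ i / √5) * (3 * (ψ^2) ^ i) := by
        apply mul_le_mul h1 h2 (abs_nonneg _) (by positivity)
    _ = 6 / √5 * (φ ^ i * (ψ^2) ^ i) := by ring
    _ = 6 / √5 * (φ⁻¹) ^ i := by rw [key]

lemma R_bound (m : ℕ) :
    |∑ i ∈ Icc 1 m, (Nat.fib i : ℝ) * HE i| ≤ Mbd := by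
  calc |∑ i ∈ Icc 1 m, (Nat.fib i : ℝ) * HE i|
      ≤ ∑ i ∈ Icc 1 m, |(Nat.fib i : ℝ) * HE i| := Finset.abs_sum_le_sum_abs _ _
    _ ≤ ∑ i ∈ Icc 1 m, 6 / √5 * (φ⁻¹) ^ i := by
        apply Finset.sum_le_sum
        intro i hi
        exact term_bound i (Finset.mem_Icc.mp hi).1
    _ ≤ ∑ i ∈ Finset.range (m+1), 6 / √5 * (φ⁻¹) ^ i := by
        apply Finset.sum_le_sum_of_subset_of_nonneg
        · intro i hi
          rw [Finset.mem_range]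
          exact Nat.lt_succ_of_le (Finset.mem_Icc.mp hi).2
        · intro i _ _; positivity
    _ = 6 / √5 * ∑ i ∈ Finset.range (m+1), (φ⁻¹) ^ i := by rw [Finset.mul_sum]
    _ ≤ Mbd := by
        unfold Mbd
        have hq : (φ⁻¹ : ℝ) ≠ 1 := inv_gold_lt_one.ne
        have h1q : (0:ℝ) < 1 - φ⁻¹ := by linarith [inv_gold_lt_one]
        have hsum : ∑ i ∈ Finset.range (m+1), (φ⁻¹) ^ i ≤ 1/(1-φ⁻¹) := by
          rw [geom_sum_eq hq]
          have heq : ((φ⁻¹:ℝ) ^ (m+1) - 1)/(φ⁻¹ - 1) = (1 - φ⁻¹ ^ (m+1))/(1 - φ⁻¹) := by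
            rw [← neg_div_neg_eq]; ring_nf
          rw [heq]
          apply div_le_div_of_nonneg_right _ h1q.le
          have : (0:ℝ) ≤ (φ⁻¹) ^ (m+1) := pow_nonneg inv_goldenRatio_pos.le _
          linarith
        have h5 : (0:ℝ) ≤ 6/√5 := by positivity
        exact mul_le_mul_of_nonneg_left hsum h5

lemma tendsto_fibR : Tendsto (fun m : ℕ => (Nat.fib (m+2) : ℝ)) atTop atTop := by
  apply tendsto_atTop_mono _ tendsto_natCast_atTop_atTop
  intro m
  have h := Nat.le_fib_add_one (m+2)
  have : m ≤ Nat.fib (m+2) := by omega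
  exact_mod_cast this

lemma fib2_pos (m : ℕ) : (0:ℝ) < (Nat.fib (m+2) : ℝ) := by
  have : 0 < Nat.fib (m+2) := Nat.fib_pos.mpr (by omega)
  exact_mod_cast this

lemma tendsto_inv_fib : Tendsto (fun m : ℕ => ((Nat.fib (m+2) : ℝ))⁻¹) atTop (nhds 0) :=
  tendsto_fibR.inv_tendsto_atTop

lemma tendsto_HE : Tendsto (fun m : ℕ => HE (m+2)) atTop (nhds 0) := by
  have h1 : Tendsto (fun n : ℕ => ((ψ^2 : ℝ)) ^ n) atTop (nhds 0) :=
    tendsto_pow_atTop_nhds_zero_of_lt_one psi_sq_pos.le (by linarith [psi_sq_lt_half])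
  have h2 : Tendsto (fun m : ℕ => 3 * ((ψ^2 : ℝ)) ^ (m+2)) atTop (nhds 0) := by
    have := (h1.comp (tendsto_add_atTop_nat 2)).const_mul (3:ℝ)
    simpa using this
  exact squeeze_zero_norm (fun m => by simpa using abs_HE (m+2) (by omega)) h2

lemma tendsto_ratio :
    Tendsto (fun m : ℕ => (Nat.fib (m+3) : ℝ) / (Nat.fib (m+2) : ℝ)) atTop (nhds φ) := by
  have heq : ∀ m : ℕ, (Nat.fib (m+3) : ℝ) / (Nat.fib (m+2) : ℝ) =
      φ + ψ ^ (m+2) / (Nat.fib (m+2) : ℝ) := by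
    intro m
    have h := fib_succ_sub_goldenRatio_mul_fib (m+2)
    have hF := fib2_pos m
    have hf3 : (Nat.fib (m+3) : ℝ) = φ * (Nat.fib (m+2) : ℝ) + ψ ^ (m+2) := by
      have : (m+2)+1 = m+3 := by ring
      rw [this] at h
      linarith [h]
    rw [hf3, add_div, mul_div_assoc, div_self hF.ne', mul_one]
  have h0 : Tendsto (fun m : ℕ => ψ ^ (m+2) / (Nat.fib (m+2) : ℝ)) atTop (nhds 0) := by
    apply squeeze_zero_norm (a := fun m => ((Nat.fib (m+2) : ℝ))⁻¹) _ tendsto_inv_fib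
    intro m
    have hF := fib2_pos m
    rw [norm_div, norm_pow]
    rw [div_eq_mul_inv]
    have hψ : ‖(ψ:ℝ)‖ ≤ 1 := by
      rw [Real.norm_eq_abs, abs_le]
      constructor <;> [linarith [neg_one_lt_goldenConj]; linarith [goldenConj_neg]]
    calc ‖(ψ:ℝ)‖ ^ (m+2) * ‖(Nat.fib (m+2) : ℝ)‖⁻¹ ≤ 1 * ‖(Nat.fib (m+2) : ℝ)‖⁻¹ := by
          apply mul_le_mul_of_nonneg_right (pow_le_one₀ (norm_nonneg _) hψ) (by positivity)
      _ = ((Nat.fib (m+2) : ℝ))⁻¹ := by rw [one_mul, Real.norm_eq_abs, abs_of_pos (fib2_pos m)]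
  have := (tendsto_const_nhds (x := φ) (f := atTop (α := ℕ))).add h0
  rw [add_zero] at this
  exact this.congr (fun m => (heq m).symm)

lemma tendsto_Rterm :
    Tendsto (fun m : ℕ => (∑ i ∈ Icc 1 m, (Nat.fib i : ℝ) * HE i) / (Nat.fib (m+2) : ℝ))
      atTop (nhds 0) := by
  apply squeeze_zero_norm (a := fun m => Mbd * ((Nat.fib (m+2) : ℝ))⁻¹)
  · intro m
    have hF := fib2_pos m
    rw [norm_div, Real.norm_eq_abs, Real.norm_eq_abs, abs_of_pos hF, div_eq_mul_inv]
    exact mul_le_mul_of_nonneg_right (R_bound m) (by positivity)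
  · simpa using tendsto_inv_fib.const_mul Mbd

noncomputable def G (m : ℕ) : ℝ :=
  HE (m+2) + 2*HL + HL * ((Nat.fib (m+3) : ℝ) / (Nat.fib (m+2) : ℝ))
    - (2*HL) / (Nat.fib (m+2) : ℝ) - Hc / (Nat.fib (m+2) : ℝ)
    - (∑ i ∈ Icc 1 m, (Nat.fib i : ℝ) * HE i) / (Nat.fib (m+2) : ℝ)

lemma Hmax_eq (m : ℕ) : Hmax (m+1) = G m := by
  have hF := fib2_pos m
  have hsum : ∑ i ∈ Icc 1 m, (Nat.fib i : ℝ) * Real.logb 2 (Nat.fib i : ℝ)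
      = HL * ((m:ℝ) * (Nat.fib (m+2) : ℝ) - (Nat.fib (m+3) : ℝ) + 2)
        - Hc * ((Nat.fib (m+2) : ℝ) - 1)
        + ∑ i ∈ Icc 1 m, (Nat.fib i : ℝ) * HE i := by
    have step : ∀ i ∈ Icc 1 m, (Nat.fib i : ℝ) * Real.logb 2 (Nat.fib i : ℝ)
        = HL * ((i:ℝ) * (Nat.fib i : ℝ)) - Hc * (Nat.fib i : ℝ) + (Nat.fib i : ℝ) * HE i := by
      intro i _
      have : Real.logb 2 (Nat.fib i : ℝ) = (i:ℝ) * HL - Hc + HE i := by unfold HE; ring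
      rw [this]; ring
    rw [Finset.sum_congr rfl step]
    rw [Finset.sum_add_distrib, Finset.sum_sub_distrib, ← Finset.mul_sum, ← Finset.mul_sum]
    rw [sum_fib_real, sum_i_fib_real]
  have hlog : Real.logb 2 (Nat.fib (m+2) : ℝ) = ((m:ℝ)+2) * HL - Hc + HE (m+2) := by
    have : HE (m+2) = Real.logb 2 (Nat.fib (m+2) : ℝ) - (((m:ℝ)+2) * HL - Hc) := by
      unfold HE; push_cast; ring
    linarith [this]
  unfold Hmax G
  rw [show m+1+1 = m+2 by ring, show m+1-1 = m by omega, hsum, hlog]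
  field_simp
  ring

lemma t_inv : 1/((√5 - 1)/2) = φ := by
  have ht0 : ((√5:ℝ) - 1)/2 ≠ 0 := by
    have := two_lt_sqrt5; intro hc; rw [div_eq_zero_iff] at hc
    rcases hc with h | h <;> linarith
  rw [div_eq_iff ht0, goldenRatio]
  linear_combination (-1/4 : ℝ) * sq_sqrt5

lemma t_inv_sq : 1/((√5 - 1)/2)^2 = φ + 1 := by
  rw [one_div, ← inv_pow, ← one_div, t_inv, goldenRatio_sq]

/-- With `t = (√5 - 1)/2`, the maximal entropies `H_n^max` converge to
`(1 + t⁻²) log₂ (1/t)` as `n → ∞`, and this value equals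
`L log₂ L - (L - 1) log₂ (L - 1)` for `L = t⁻²`. -/
theorem Hmax_tendsto :
    (Filter.Tendsto Hmax Filter.atTop
      (nhds ((1 + 1 / ((Real.sqrt 5 - 1) / 2) ^ 2) *
        Real.logb 2 (1 / ((Real.sqrt 5 - 1) / 2))))) ∧
    (∀ t : ℝ, t = (Real.sqrt 5 - 1) / 2 →
      (1 / t ^ 2) * Real.logb 2 (1 / t ^ 2) -
          (1 / t ^ 2 - 1) * Real.logb 2 (1 / t ^ 2 - 1) =
        (1 + 1 / t ^ 2) * Real.logb 2 (1 / t)) := by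
  have hval : (1 + 1 / ((Real.sqrt 5 - 1) / 2) ^ 2) *
      Real.logb 2 (1 / ((Real.sqrt 5 - 1) / 2)) = (2 + φ) * HL := by
    rw [t_inv, t_inv_sq]; unfold HL; ring
  constructor
  · rw [hval]
    have hG : Tendsto G atTop (nhds (0 + 2*HL + HL*φ - 0 - 0 - 0)) := by
      exact ((((tendsto_HE.add tendsto_const_nhds).add
        (tendsto_ratio.const_mul HL)).sub
        (Tendsto.div_atTop tendsto_const_nhds tendsto_fibR)).sub
        (Tendsto.div_atTop tendsto_const_nhds tendsto_fibR)).sub tendsto_Rterm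
    rw [show (0:ℝ) + 2*HL + HL*φ - 0 - 0 - 0 = (2+φ)*HL by ring] at hG
    rw [← Filter.tendsto_add_atTop_iff_nat 1]
    exact hG.congr (fun m => (Hmax_eq m).symm)
  · intro t ht
    subst ht
    rw [t_inv, t_inv_sq, show (φ:ℝ) + 1 - 1 = φ by ring, ← goldenRatio_sq, Real.logb_pow]
    push_cast
    linear_combination (Real.logb 2 φ) * goldenRatio_sq
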